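/- The alliance polynomial of the cycle graph C_n on n ≥ 3 vertices is A(C_n;x) = n·x^{n−2} + n(n−2)·x^n + x^{n+2}, and this polynomial has unimodal coefficient sequence. -/

import Mathlib

open Finset Polynomial

section
open scoped Classical

noncomputable section

variable {V : Type*} [Fintype V]

/-- Number of neighbors of `v` inside `S` (as an integer). -/
def degIn (G : SimpleGraph V) (S : Finset V) (v : V) : ℤ :=
  ((S.filter (fun u => G.Adj v u)).card : ℤ)

/-- Number of neighbors of `v` outside `S` (as an integer). -/
def degOut (G : SimpleGraph V) (S : Finset V) (v : V) : ℤ :=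
  ((Sᶜ.filter (fun u => G.Adj v u)).card : ℤ)

/-- The exact index of alliance of `S`. -/
def exactIndex (G : SimpleGraph V) (S : Finset V) : ℤ :=
  if h : S.Nonempty then S.inf' h (fun v => degIn G S v - degOut G S v) else 0

/-- Nonempty vertex subsets inducing a connected subgraph. -/
def goodSets (G : SimpleGraph V) : Finset (Finset V) :=
  Finset.univ.filter (fun S => S.Nonempty ∧ (G.induce (S : Set V)).Connected)

/-- The alliance polynomial. -/
def alliancePoly (G : SimpleGraph V) : Polynomial ℤ :=
  ∑ S ∈ goodSets G, X ^ (((Fintype.card V : ℤ) + exactIndex G S).toNat)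

/-- `A_k(Γ)`: number of connected exact defensive `k`-alliances. -/
def allianceCount (G : SimpleGraph V) (k : ℤ) : ℕ :=
  ((goodSets G).filter (fun S => exactIndex G S = k)).card

end

end

namespace AllianceScratch

open scoped Fin.CommRing Fin.NatCast

variable {n : ℕ} [NeZero n]

/-- The arc of length `s` starting at `i` in `Fin n`. -/
def arc (i : Fin n) (s : ℕ) : Finset (Fin n) :=
  Finset.univ.filter (fun v => (v - i).val < s)

lemma mem_arc {i v : Fin n} {s : ℕ} : v ∈ arc i s ↔ (v - i).val < s := by
  simp [arc]

lemma eq_add_sub_val (u i : Fin n) : u = i + (((u - i).val : ℕ) : Fin n) := by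
  rw [Fin.cast_val_eq_self]; ring

lemma val_add_one_sub (hn : 2 ≤ n) (v i : Fin n) :
    (v + 1 - i).val = ((v - i).val + 1) % n := by
  have h1 : (1 : Fin n).val = 1 := by
    simp [Fin.val_one', Nat.mod_eq_of_lt (by omega : 1 < n)]
  have h : v + 1 - i = (v - i) + 1 := by ring
  rw [h, Fin.val_add, h1]

lemma val_sub_one_sub (hn : 2 ≤ n) (v i : Fin n) :
    (v - 1 - i).val = ((v - i).val + (n - 1)) % n := by
  have h1 : (1 : Fin n).val = 1 := by
    simp [Fin.val_one', Nat.mod_eq_of_lt (by omega : 1 < n)]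
  have h : v - 1 - i = (v - i) - 1 := by ring
  rw [h, Fin.sub_def]
  simp only [h1, Fin.val_mk]
  rw [Nat.add_comm]

lemma val_add_cast_sub (i : Fin n) {t : ℕ} (ht : t < n) :
    ((i + (t : Fin n)) - i).val = t := by
  have : i + (t : Fin n) - i = (t : Fin n) := by ring
  rw [this, Fin.val_cast_of_lt ht]

lemma sub_one_eq (i : Fin n) : i - 1 = i + (((n - 1 : ℕ) : ℕ) : Fin n) := by
  have h : ((n : ℕ) : Fin n) = 0 := by
    simp [Fin.natCast_self]
  have hn1 : (1 : ℕ) ≤ n := NeZero.pos n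
  have : (((n - 1 : ℕ) : ℕ) : Fin n) = ((n : ℕ) : Fin n) - 1 := by
    rw [Nat.cast_sub hn1]; simp
  rw [this, h]; ring


lemma adj_iff (hn : 2 ≤ n) {u v : Fin n} :
    (SimpleGraph.cycleGraph n).Adj u v ↔ u = v + 1 ∨ v = u + 1 := by
  have h1 : (1 : Fin n).val = 1 := by
    simp [Fin.val_one', Nat.mod_eq_of_lt (by omega : 1 < n)]
  rw [SimpleGraph.cycleGraph_adj']
  constructor
  · rintro (h | h)
    · left
      have : u - v = 1 := Fin.ext (by rw [h1]; exact h)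
      rw [← this]; ring
    · right
      have : v - u = 1 := Fin.ext (by rw [h1]; exact h)
      rw [← this]; ring
  · rintro (rfl | rfl)
    · left; rw [show v + 1 - v = 1 by ring, h1]
    · right; rw [show u + 1 - u = 1 by ring, h1]

/-- One step of a walk inside `S` starting in `arc i m` stays in `arc i m`. -/
lemma step_stay (hn : 3 ≤ n) {S : Finset (Fin n)} {i : Fin n} {m : ℕ} (hm : m < n)
    (hiS : i - 1 ∉ S) (htop : i + (m : Fin n) ∉ S)
    {a u : Fin n} (ha : a ∈ arc i m) (hadj : (SimpleGraph.cycleGraph n).Adj a u)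
    (huS : u ∈ S) : u ∈ arc i m := by
  have hn2 : 2 ≤ n := by omega
  set t := (a - i).val with hta
  have ht : t < m := mem_arc.mp ha
  rcases (adj_iff hn2).mp hadj with h | h
  · -- a = u + 1, i.e. u = a - 1
    have hu : u = a - 1 := by rw [h]; ring
    have hv : (u - i).val = (t + (n - 1)) % n := by rw [hu, val_sub_one_sub hn2]
    by_cases hc : 1 ≤ t
    · refine mem_arc.mpr ?_
      rw [hv]
      have he : t + (n - 1) = (t - 1) + n := by omega
      rw [he, Nat.add_mod_right, Nat.mod_eq_of_lt (by omega)]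
      omega
    · -- t = 0, so u = i - 1
      exfalso
      apply hiS
      have ht0 : t = 0 := by omega
      have hv2 : (u - i).val = n - 1 := by
        rw [hv, ht0, Nat.zero_add, Nat.mod_eq_of_lt (by omega)]
      have he : u = i + (((u - i).val : ℕ) : Fin n) := eq_add_sub_val u i
      rw [hv2, ← sub_one_eq] at he
      rw [← he]; exact huS
  · -- u = a + 1
    have hv : (u - i).val = (t + 1) % n := by rw [h, val_add_one_sub hn2]
    by_cases hc : t + 1 < m
    · exact mem_arc.mpr (by rw [hv, Nat.mod_eq_of_lt (by omega)]; omega)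
    · -- t + 1 = m, so u = i + m
      have hm1 : t + 1 = m := by omega
      exfalso
      apply htop
      have he : u = i + (((u - i).val : ℕ) : Fin n) := eq_add_sub_val u i
      rw [hv, hm1, Nat.mod_eq_of_lt hm] at he
      rw [← he]; exact huS

lemma walk_stay (hn : 3 ≤ n) {S : Finset (Fin n)} {i : Fin n} {m : ℕ} (hm : m < n)
    (hiS : i - 1 ∉ S) (htop : i + (m : Fin n) ∉ S)
    {a b : ↥((S : Set (Fin n)))}
    (w : ((SimpleGraph.cycleGraph n).induce (S : Set (Fin n))).Walk a b)
    (ha : (a : Fin n) ∈ arc i m) : (b : Fin n) ∈ arc i m := by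
  induction w with
  | nil => exact ha
  | @cons x y z h p ih =>
    exact ih (step_stay hn hm hiS htop ha h (by exact_mod_cast y.2))


lemma mem_goodSets {V : Type*} [Fintype V] {G : SimpleGraph V} {S : Finset V} :
    S ∈ goodSets G ↔ S.Nonempty ∧ (G.induce (S : Set V)).Connected := by
  simp [goodSets]

lemma card_arc (i : Fin n) {s : ℕ} (hs : s ≤ n) : (arc i s).card = s := by
  have h : (arc i s).card = (Finset.range s).card := by
    apply Finset.card_bij (fun v _ => (v - i).val)
    · intro v hv; exact Finset.mem_range.mpr (mem_arc.mp hv)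
    · intro v hv w hw hvw
      have hv' := eq_add_sub_val v i
      have hw' := eq_add_sub_val w i
      rw [hv', hw', hvw]
    · intro t ht
      rw [Finset.mem_range] at ht
      refine ⟨i + (t : Fin n), mem_arc.mpr ?_, ?_⟩
      · rw [val_add_cast_sub i (by omega)]; omega
      · rw [val_add_cast_sub i (by omega)]
  rw [h, Finset.card_range]

lemma arc_one (i : Fin n) : arc i 1 = {i} := by
  ext v
  rw [mem_arc, Finset.mem_singleton]
  constructor
  · intro h
    have := eq_add_sub_val v i
    rw [Nat.lt_one_iff.mp h] at this
    simpa using this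
  · rintro rfl; simp

lemma mem_arc_self {i : Fin n} {s : ℕ} (hs : 1 ≤ s) : i ∈ arc i s := by
  rw [mem_arc]; simp [hs]; omega

lemma sub_one_not_mem_arc (hn : 2 ≤ n) {i : Fin n} {s : ℕ} (hs : s ≤ n - 1) :
    i - 1 ∉ arc i s := by
  rw [mem_arc]
  have : (i - 1 - i).val = (n - 1) % n := by
    rw [val_sub_one_sub hn]
    congr 1
    simp
  rw [this, Nat.mod_eq_of_lt (by omega)]
  omega

lemma arc_inj (hn : 3 ≤ n) {i i' : Fin n} {s s' : ℕ}
    (h1 : 1 ≤ s) (h2 : s ≤ n - 1) (h1' : 1 ≤ s') (h2' : s' ≤ n - 1)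
    (h : arc i s = arc i' s') : i = i' ∧ s = s' := by
  have hn2 : 2 ≤ n := by omega
  have hss : s = s' := by
    have := card_arc i (s := s) (by omega)
    have := card_arc i' (s := s') (by omega)
    rw [h] at *; omega
  subst hss
  refine ⟨?_, rfl⟩
  by_contra hne
  have hi : i ∈ arc i' s := h ▸ mem_arc_self h1
  have ht : (i - i').val < s := mem_arc.mp hi
  have ht1 : 1 ≤ (i - i').val := by
    rcases Nat.eq_zero_or_pos (i - i').val with h0 | h0
    · exfalso; apply hne
      have := eq_add_sub_val i i'
      rw [h0] at this; simpa using this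
    · omega
  -- then i - 1 ∈ arc i' s
  have hmem : i - 1 ∈ arc i' s := by
    rw [mem_arc, val_sub_one_sub hn2]
    have he : (i - i').val + (n - 1) = ((i - i').val - 1) + n := by omega
    rw [he, Nat.add_mod_right, Nat.mod_eq_of_lt (by omega)]
    omega
  rw [← h] at hmem
  exact sub_one_not_mem_arc hn2 h2 hmem

lemma arc_connected (hn : 3 ≤ n) (i : Fin n) {s : ℕ} (h1 : 1 ≤ s) (h2 : s ≤ n) :
    ((SimpleGraph.cycleGraph n).induce ((arc i s : Finset (Fin n)) : Set (Fin n))).Connected := by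
  have hn2 : 2 ≤ n := by omega
  have hi : i ∈ arc i s := mem_arc_self h1
  have hi' : (i : Fin n) ∈ ((arc i s : Finset (Fin n)) : Set (Fin n)) := by exact_mod_cast hi
  have key : ∀ t : ℕ, ∀ v : Fin n, ∀ hv : v ∈ ((arc i s : Finset (Fin n)) : Set (Fin n)),
      (v - i).val = t →
      ((SimpleGraph.cycleGraph n).induce ((arc i s : Finset (Fin n)) : Set (Fin n))).Reachable
        ⟨i, hi'⟩ ⟨v, hv⟩ := by
    intro t
    induction t with
    | zero =>
      intro v hv h0
      have : v = i := by
        have := eq_add_sub_val v i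
        rw [h0] at this; simpa using this
      subst this
      exact SimpleGraph.Reachable.refl _
    | succ t ih =>
      intro v hv hst
      have hvm : v ∈ arc i s := by exact_mod_cast hv
      have hts : t + 1 < s := by rw [← hst]; exact mem_arc.mp hvm
      have hvp : (v - 1 - i).val = t := by
        rw [val_sub_one_sub hn2, hst]
        have he : t + 1 + (n - 1) = t + n := by omega
        rw [he, Nat.add_mod_right, Nat.mod_eq_of_lt (by omega)]
      have hvpm : v - 1 ∈ arc i s := mem_arc.mpr (by rw [hvp]; omega)
      have hvpm' : (v - 1 : Fin n) ∈ ((arc i s : Finset (Fin n)) : Set (Fin n)) := by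
        exact_mod_cast hvpm
      have hr := ih (v - 1) hvpm' hvp
      have hadj : ((SimpleGraph.cycleGraph n).induce
          ((arc i s : Finset (Fin n)) : Set (Fin n))).Adj ⟨v - 1, hvpm'⟩ ⟨v, hv⟩ := by
        have := (adj_iff hn2).mpr (Or.inr (show v = (v - 1) + 1 by ring))
        exact this
      exact hr.trans hadj.reachable
  rw [SimpleGraph.connected_iff]
  constructor
  · rintro ⟨a, haa⟩ ⟨b, hbb⟩
    exact ((key _ a haa rfl).symm).trans (key _ b hbb rfl)
  · exact ⟨⟨i, hi'⟩⟩

lemma good_classify (hn : 3 ≤ n) {S : Finset (Fin n)}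
    (hS : S ∈ goodSets (SimpleGraph.cycleGraph n)) :
    S = Finset.univ ∨ ∃ i : Fin n, ∃ s : ℕ, 1 ≤ s ∧ s ≤ n - 1 ∧ S = arc i s := by
  obtain ⟨hne, hconn⟩ := mem_goodSets.mp hS
  by_cases huniv : S = Finset.univ
  · exact Or.inl huniv
  right
  -- find a vertex not in S
  obtain ⟨j, hj⟩ : ∃ j : Fin n, j ∉ S := by
    by_contra hc
    push_neg at hc
    exact huniv (Finset.eq_univ_iff_forall.mpr hc)
  obtain ⟨x, hx⟩ := hne
  -- find a left endpoint
  have hP : ∃ t : ℕ, j + (t : Fin n) ∈ S := by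
    refine ⟨(x - j).val, ?_⟩
    rw [← eq_add_sub_val x j]
    exact hx
  set t₀ := Nat.find hP with ht₀
  have ht₀S : j + (t₀ : Fin n) ∈ S := Nat.find_spec hP
  have ht₀pos : 1 ≤ t₀ := by
    by_contra hc
    push_neg at hc
    interval_cases t₀
    · simp at ht₀S; exact hj ht₀S
  set i := j + (t₀ : Fin n) with hi
  have hiS : i ∈ S := ht₀S
  have hileft : i - 1 ∉ S := by
    have hlt : t₀ - 1 < t₀ := by omega
    have := Nat.find_min hP hlt
    have hcast : ((t₀ - 1 : ℕ) : Fin n) = (t₀ : Fin n) - 1 := by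
      have h1 : ((t₀ - 1 : ℕ) : Fin n) + 1 = (((t₀ - 1) + 1 : ℕ) : Fin n) := by push_cast; ring
      have h2 : (t₀ - 1) + 1 = t₀ := by omega
      have h3 : ((t₀ - 1 : ℕ) : Fin n) + 1 = (t₀ : Fin n) := by rw [h1, h2]
      rw [← h3]; ring
    intro hc
    apply this
    have he : j + ((t₀ - 1 : ℕ) : Fin n) = i - 1 := by rw [hcast, hi]; ring
    rw [he]; exact hc
  -- find the right endpoint
  have hQ : ∃ m : ℕ, i + (m : Fin n) ∉ S := by
    refine ⟨n - 1, ?_⟩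
    rw [← sub_one_eq]
    exact hileft
  set m₀ := Nat.find hQ with hm₀
  have hm₀S : i + (m₀ : Fin n) ∉ S := Nat.find_spec hQ
  have hm₀le : m₀ ≤ n - 1 := Nat.find_le (by rw [← sub_one_eq]; exact hileft)
  have hm₀pos : 1 ≤ m₀ := by
    by_contra hc
    push_neg at hc
    interval_cases m₀
    · simp at hm₀S; exact hm₀S hiS
  refine ⟨i, m₀, hm₀pos, hm₀le, ?_⟩
  apply Finset.Subset.antisymm
  · -- S ⊆ arc i m₀ via walks
    intro y hy
    have hi' : (i : Fin n) ∈ ((S : Finset (Fin n)) : Set (Fin n)) := by exact_mod_cast hiS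
    have hy' : (y : Fin n) ∈ ((S : Finset (Fin n)) : Set (Fin n)) := by exact_mod_cast hy
    obtain ⟨w⟩ := hconn.preconnected ⟨i, hi'⟩ ⟨y, hy'⟩
    exact walk_stay hn (by omega) hileft hm₀S w (mem_arc_self hm₀pos)
  · -- arc i m₀ ⊆ S by minimality
    intro v hv
    have ht : (v - i).val < m₀ := mem_arc.mp hv
    have := Nat.find_min hQ ht
    push_neg at this
    rw [← eq_add_sub_val v i] at this
    exact this


lemma degIn_eq_card {V : Type*} [Fintype V] (G : SimpleGraph V) [DecidableRel G.Adj]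
    (S : Finset V) (v : V) :
    degIn G S v = ((S.filter (fun u => G.Adj v u)).card : ℤ) := by
  unfold degIn
  exact congrArg _ (congrArg Finset.card (Finset.filter_congr_decidable _ _ _))

lemma degOut_eq_card {V : Type*} [Fintype V] [DecidableEq V] (G : SimpleGraph V)
    [DecidableRel G.Adj] (S : Finset V) (v : V) :
    degOut G S v = ((Sᶜ.filter (fun u => G.Adj v u)).card : ℤ) := by
  unfold degOut
  congr!

lemma exactIndex_of_nonempty {V : Type*} [Fintype V] {G : SimpleGraph V} {S : Finset V}
    (h : S.Nonempty) :
    exactIndex G S = S.inf' h (fun v => degIn G S v - degOut G S v) := dif_pos h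

lemma degIn_add_degOut (hn : 3 ≤ n) (S : Finset (Fin n)) (v : Fin n) :
    degIn (SimpleGraph.cycleGraph n) S v + degOut (SimpleGraph.cycleGraph n) S v = 2 := by
  rw [degIn_eq_card, degOut_eq_card, ← Nat.cast_add]
  norm_cast
  have hdisj : Disjoint (S.filter (fun u => (SimpleGraph.cycleGraph n).Adj v u))
      (Sᶜ.filter (fun u => (SimpleGraph.cycleGraph n).Adj v u)) :=
    Finset.disjoint_filter_filter disjoint_compl_right
  rw [← Finset.card_union_of_disjoint hdisj, ← Finset.filter_union, Finset.union_compl]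
  obtain ⟨m, rfl⟩ : ∃ m, n = m + 3 := ⟨n - 3, by omega⟩
  have he : (Finset.univ.filter (fun u => (SimpleGraph.cycleGraph (m + 3)).Adj v u))
      = (SimpleGraph.cycleGraph (m + 3)).neighborFinset v := by
    ext u; simp [SimpleGraph.mem_neighborFinset]
  rw [he]
  exact SimpleGraph.cycleGraph_degree_three_le

lemma one_le_degIn (hn : 3 ≤ n) {S : Finset (Fin n)} {v u : Fin n} (hu : u ∈ S)
    (hadj : (SimpleGraph.cycleGraph n).Adj v u) :
    1 ≤ degIn (SimpleGraph.cycleGraph n) S v := by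
  rw [degIn_eq_card]
  have h0 : 0 < (S.filter (fun u => (SimpleGraph.cycleGraph n).Adj v u)).card :=
    Finset.card_pos.mpr ⟨u, Finset.mem_filter.mpr ⟨hu, hadj⟩⟩
  exact_mod_cast Nat.succ_le_of_lt h0

lemma exactIndex_singleton (hn : 3 ≤ n) (i : Fin n) :
    exactIndex (SimpleGraph.cycleGraph n) {i} = -2 := by
  rw [exactIndex_of_nonempty (Finset.singleton_nonempty i), Finset.inf'_singleton]
  have h1 : degIn (SimpleGraph.cycleGraph n) {i} i = 0 := by
    rw [degIn_eq_card]
    norm_cast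
    rw [Finset.card_eq_zero]
    ext u
    simp only [Finset.mem_filter, Finset.mem_singleton, Finset.notMem_empty, iff_false, not_and]
    rintro rfl h
    exact (SimpleGraph.cycleGraph n).irrefl h
  have h2 := degIn_add_degOut hn {i} i
  omega

lemma val_one_fin (hn : 2 ≤ n) : (1 : Fin n).val = 1 := by
  simp [Fin.val_one', Nat.mod_eq_of_lt (by omega : 1 < n)]

lemma exactIndex_arc (hn : 3 ≤ n) (i : Fin n) {s : ℕ} (h2 : 2 ≤ s) (hs : s ≤ n - 1) :
    exactIndex (SimpleGraph.cycleGraph n) (arc i s) = 0 := by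
  have hn2 : 2 ≤ n := by omega
  have hne : (arc i s).Nonempty := ⟨i, mem_arc_self (by omega)⟩
  rw [exactIndex_of_nonempty hne]
  apply le_antisymm
  · -- value at i is 0
    have hfi : (arc i s).filter (fun u => (SimpleGraph.cycleGraph n).Adj i u) = {i + 1} := by
      ext u
      simp only [Finset.mem_filter, Finset.mem_singleton]
      constructor
      · rintro ⟨hu, hadj⟩
        rcases (adj_iff hn2).mp hadj with h | h
        · exfalso
          have hu' : u = i - 1 := by rw [h]; ring
          rw [hu'] at hu
          exact sub_one_not_mem_arc hn2 hs hu
        · exact h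
      · rintro rfl
        refine ⟨?_, (adj_iff hn2).mpr (Or.inr rfl)⟩
        rw [mem_arc, val_add_one_sub hn2]
        simp only [sub_self, Fin.val_zero, Nat.zero_add]
        rw [Nat.mod_eq_of_lt (by omega)]
        omega
    have hdi : degIn (SimpleGraph.cycleGraph n) (arc i s) i = 1 := by
      rw [degIn_eq_card, hfi, Finset.card_singleton]
      norm_num
    have hsum := degIn_add_degOut hn (arc i s) i
    have := Finset.inf'_le (fun v => degIn (SimpleGraph.cycleGraph n) (arc i s) v
        - degOut (SimpleGraph.cycleGraph n) (arc i s) v) (mem_arc_self (i := i) (show 1 ≤ s by omega))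
    omega
  · apply Finset.le_inf'
    intro v hv
    set t := (v - i).val with hteq
    have ht : t < s := mem_arc.mp hv
    have hex : ∃ u ∈ arc i s, (SimpleGraph.cycleGraph n).Adj v u := by
      by_cases hc : t + 1 < s
      · refine ⟨v + 1, ?_, (adj_iff hn2).mpr (Or.inr rfl)⟩
        rw [mem_arc, val_add_one_sub hn2, ← hteq, Nat.mod_eq_of_lt (by omega)]
        omega
      · refine ⟨v - 1, ?_, (adj_iff hn2).mpr (Or.inl (by ring))⟩
        have ht1 : 1 ≤ t := by omega
        rw [mem_arc, val_sub_one_sub hn2, ← hteq]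
        have he : t + (n - 1) = (t - 1) + n := by omega
        rw [he, Nat.add_mod_right, Nat.mod_eq_of_lt (by omega)]
        omega
    obtain ⟨u, hu, hadj⟩ := hex
    have h1 := one_le_degIn hn hu hadj
    have hsum := degIn_add_degOut hn (arc i s) v
    omega

lemma exactIndex_univ (hn : 3 ≤ n) :
    exactIndex (SimpleGraph.cycleGraph n) (Finset.univ : Finset (Fin n)) = 2 := by
  have hne : (Finset.univ : Finset (Fin n)).Nonempty := ⟨⟨0, by omega⟩, Finset.mem_univ _⟩
  rw [exactIndex_of_nonempty hne]
  have hval : ∀ v : Fin n, degIn (SimpleGraph.cycleGraph n) Finset.univ v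
      - degOut (SimpleGraph.cycleGraph n) Finset.univ v = 2 := by
    intro v
    have hdo : degOut (SimpleGraph.cycleGraph n) (Finset.univ : Finset (Fin n)) v = 0 := by
      rw [degOut_eq_card]
      simp
    have := degIn_add_degOut hn Finset.univ v
    omega
  apply le_antisymm
  · have := Finset.inf'_le (fun v => degIn (SimpleGraph.cycleGraph n) Finset.univ v
        - degOut (SimpleGraph.cycleGraph n) Finset.univ v) (Finset.mem_univ (⟨0, by omega⟩ : Fin n))
    rw [hval] at this
    exact this
  · exact Finset.le_inf' hne _ (fun v _ => (hval v).ge)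


lemma arc_univ (i : Fin n) : arc i n = Finset.univ := by
  ext v; simp [mem_arc, Fin.is_lt]

lemma singleton_good (hn : 3 ≤ n) (i : Fin n) :
    ({i} : Finset (Fin n)) ∈ goodSets (SimpleGraph.cycleGraph n) := by
  rw [mem_goodSets, ← arc_one]
  exact ⟨⟨i, mem_arc_self le_rfl⟩, arc_connected hn i le_rfl (by omega)⟩

lemma arc_good (hn : 3 ≤ n) (i : Fin n) {s : ℕ} (h1 : 1 ≤ s) (h2 : s ≤ n) :
    arc i s ∈ goodSets (SimpleGraph.cycleGraph n) :=
  mem_goodSets.mpr ⟨⟨i, mem_arc_self h1⟩, arc_connected hn i h1 h2⟩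

lemma univ_good (hn : 3 ≤ n) :
    (Finset.univ : Finset (Fin n)) ∈ goodSets (SimpleGraph.cycleGraph n) := by
  rw [← arc_univ (⟨0, by omega⟩ : Fin n)]
  exact arc_good hn _ (by omega) le_rfl

lemma goodSets_eq (hn : 3 ≤ n) :
    goodSets (SimpleGraph.cycleGraph n)
      = ((Finset.univ.image (fun i : Fin n => ({i} : Finset (Fin n))))
        ∪ ((Finset.univ ×ˢ Finset.Icc 2 (n - 1)).image (fun p : Fin n × ℕ => arc p.1 p.2)))
        ∪ {Finset.univ} := by
  apply Finset.Subset.antisymm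
  · intro S hS
    rcases good_classify hn hS with rfl | ⟨i, s, h1, h2, rfl⟩
    · exact Finset.mem_union_right _ (Finset.mem_singleton_self _)
    · apply Finset.mem_union_left
      by_cases hs1 : s = 1
      · subst hs1
        rw [arc_one]
        exact Finset.mem_union_left _ (Finset.mem_image_of_mem _ (Finset.mem_univ i))
      · apply Finset.mem_union_right
        exact Finset.mem_image.mpr ⟨(i, s), by
          rw [Finset.mem_product]
          exact ⟨Finset.mem_univ i, Finset.mem_Icc.mpr ⟨by omega, h2⟩⟩, rfl⟩
  · intro S hS
    rcases Finset.mem_union.mp hS with h | h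
    · rcases Finset.mem_union.mp h with h | h
      · obtain ⟨i, _, rfl⟩ := Finset.mem_image.mp h
        exact singleton_good hn i
      · obtain ⟨⟨i, s⟩, hmem, rfl⟩ := Finset.mem_image.mp h
        rw [Finset.mem_product, Finset.mem_Icc] at hmem
        exact arc_good hn i (by omega) (by omega)
    · rw [Finset.mem_singleton.mp h]
      exact univ_good hn

lemma alliance_formula (hn : 3 ≤ n) :
    alliancePoly (SimpleGraph.cycleGraph n)
      = C (n : ℤ) * X ^ (n - 2) + C ((n : ℤ) * ((n : ℤ) - 2)) * X ^ n + X ^ (n + 2) := by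
  have hcard : Fintype.card (Fin n) = n := Fintype.card_fin n
  unfold alliancePoly
  rw [goodSets_eq hn]
  set A := (Finset.univ.image (fun i : Fin n => ({i} : Finset (Fin n)))) with hA
  set B := ((Finset.univ ×ˢ Finset.Icc 2 (n - 1)).image (fun p : Fin n × ℕ => arc p.1 p.2))
    with hB
  have cardA : ∀ S ∈ A, S.card = 1 := by
    intro S hS
    obtain ⟨i, _, rfl⟩ := Finset.mem_image.mp hS
    exact Finset.card_singleton i
  have cardB : ∀ S ∈ B, 2 ≤ S.card ∧ S.card ≤ n - 1 := by
    intro S hS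
    obtain ⟨⟨i, s⟩, hmem, rfl⟩ := Finset.mem_image.mp hS
    rw [Finset.mem_product, Finset.mem_Icc] at hmem
    rw [card_arc i (by omega)]
    exact ⟨hmem.2.1, hmem.2.2⟩
  have hd2 : Disjoint A B := by
    rw [Finset.disjoint_left]
    intro S hSA hSB
    have := cardA S hSA
    have := cardB S hSB
    omega
  have hd1 : Disjoint (A ∪ B) ({Finset.univ} : Finset (Finset (Fin n))) := by
    rw [Finset.disjoint_right]
    intro S hS1 hS2
    have hSu : S = Finset.univ := Finset.mem_singleton.mp hS1
    subst hSu
    have hcu : (Finset.univ : Finset (Fin n)).card = n := by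
      rw [Finset.card_univ, hcard]
    rcases Finset.mem_union.mp hS2 with h | h
    · have := cardA _ h; omega
    · have := cardB _ h; omega
  rw [Finset.sum_union hd1, Finset.sum_union hd2]
  have hsumA : ∑ S ∈ A, (X : Polynomial ℤ)
      ^ (((Fintype.card (Fin n) : ℤ) + exactIndex (SimpleGraph.cycleGraph n) S).toNat)
      = C (n : ℤ) * X ^ (n - 2) := by
    rw [hA, Finset.sum_image (by intro a _ b _ h; exact Finset.singleton_injective h)]
    have : ∀ i : Fin n, (((Fintype.card (Fin n) : ℤ)
        + exactIndex (SimpleGraph.cycleGraph n) {i}).toNat) = n - 2 := by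
      intro i
      rw [hcard, exactIndex_singleton hn]
      omega
    rw [Finset.sum_congr rfl (fun i _ => by rw [this i])]
    rw [Finset.sum_const, Finset.card_univ, hcard, nsmul_eq_mul]
    norm_num [Polynomial.C_eq_natCast]
  have hsumB : ∑ S ∈ B, (X : Polynomial ℤ)
      ^ (((Fintype.card (Fin n) : ℤ) + exactIndex (SimpleGraph.cycleGraph n) S).toNat)
      = C ((n : ℤ) * ((n : ℤ) - 2)) * X ^ n := by
    have hinj : ∀ p ∈ Finset.univ ×ˢ Finset.Icc 2 (n - 1),
        ∀ q ∈ Finset.univ ×ˢ Finset.Icc 2 (n - 1),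
        (fun p : Fin n × ℕ => arc p.1 p.2) p = (fun p : Fin n × ℕ => arc p.1 p.2) q
        → p = q := by
      intro p hp q hq h
      rw [Finset.mem_product, Finset.mem_Icc] at hp hq
      have := arc_inj hn (by omega : 1 ≤ p.2) hp.2.2 (by omega : 1 ≤ q.2) hq.2.2 h
      exact Prod.ext this.1 this.2
    rw [hB, Finset.sum_image hinj]
    have hval : ∀ p ∈ Finset.univ ×ˢ Finset.Icc 2 (n - 1),
        (X : Polynomial ℤ) ^ (((Fintype.card (Fin n) : ℤ)
          + exactIndex (SimpleGraph.cycleGraph n) (arc p.1 p.2)).toNat) = X ^ n := by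
      intro p hp
      rw [Finset.mem_product, Finset.mem_Icc] at hp
      rw [hcard, exactIndex_arc hn p.1 hp.2.1 hp.2.2]
      norm_num
    rw [Finset.sum_congr rfl hval, Finset.sum_const, Finset.card_product, Finset.card_univ,
      hcard, Nat.card_Icc, nsmul_eq_mul]
    have h1 : n - 1 + 1 - 2 = n - 2 := by omega
    rw [h1]
    have h2 : ((n * (n - 2) : ℕ) : Polynomial ℤ) = C ((n : ℤ) * ((n : ℤ) - 2)) := by
      rw [← Polynomial.C_eq_natCast]
      congr 1
      push_cast [Nat.cast_sub (by omega : 2 ≤ n)]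
      ring
    rw [h2]
  have hsumU : ∑ S ∈ ({Finset.univ} : Finset (Finset (Fin n))), (X : Polynomial ℤ)
      ^ (((Fintype.card (Fin n) : ℤ) + exactIndex (SimpleGraph.cycleGraph n) S).toNat)
      = X ^ (n + 2) := by
    rw [Finset.sum_singleton, hcard, exactIndex_univ hn]
    have h : ((n : ℤ) + 2).toNat = n + 2 := by omega
    rw [h]
  rw [hsumA, hsumB, hsumU]


lemma coeff_formula (hn : 3 ≤ n) (m : ℕ) :
    (C (n : ℤ) * X ^ (n - 2) + C ((n : ℤ) * ((n : ℤ) - 2)) * X ^ n + X ^ (n + 2)).coeff m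
      = (if m = n - 2 then (n : ℤ) else 0)
        + (if m = n then (n : ℤ) * ((n : ℤ) - 2) else 0)
        + (if m = n + 2 then 1 else 0) := by
  simp only [coeff_add, coeff_C_mul, coeff_X_pow, mul_ite, mul_one, mul_zero]

lemma support_formula (hn : 3 ≤ n) :
    (C (n : ℤ) * X ^ (n - 2) + C ((n : ℤ) * ((n : ℤ) - 2)) * X ^ n + X ^ (n + 2)).support
      = {n - 2, n, n + 2} := by
  have hb : (n : ℤ) ≠ 0 := by exact_mod_cast (by omega : n ≠ 0)
  have hb2 : (n : ℤ) * ((n : ℤ) - 2) ≠ 0 := by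
    have h3 : (3 : ℤ) ≤ (n : ℤ) := by exact_mod_cast hn
    nlinarith
  ext m
  simp only [mem_support_iff, coeff_formula hn m, Finset.mem_insert, Finset.mem_singleton]
  constructor
  · intro h
    by_contra hc
    push_neg at hc
    rw [if_neg hc.1, if_neg hc.2.1, if_neg hc.2.2] at h
    simp at h
  · rintro (rfl | rfl | rfl)
    · rw [if_pos rfl, if_neg (by omega), if_neg (by omega)]
      simpa using hb
    · rw [if_neg (by omega), if_pos rfl, if_neg (by omega)]
      simpa using hb2
    · rw [if_neg (by omega), if_neg (by omega), if_pos rfl]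
      simp

lemma sort_three (hn : 3 ≤ n) :
    ({n - 2, n, n + 2} : Finset ℕ).sort (· ≤ ·) = [n - 2, n, n + 2] := by
  rw [Finset.sort_insert (· ≤ ·)
      (by intro b hb
          simp only [Finset.mem_insert, Finset.mem_singleton] at hb
          rcases hb with rfl | rfl <;> omega)
      (by simp only [Finset.mem_insert, Finset.mem_singleton]; omega),
    Finset.sort_insert (· ≤ ·)
      (by intro b hb
          simp only [Finset.mem_singleton] at hb
          omega)
      (by simp only [Finset.mem_singleton]; omega),
    Finset.sort_singleton]

end AllianceScratch

/-- the alliance polynomial of the cycle graph `C_n`, `n ≥ 3`,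
and its unimodality (the sequence of its nonzero coefficients, listed by
increasing exponent, is unimodal). -/
theorem alliancePoly_cycleGraph (n : ℕ) (hn : 3 ≤ n) :
    alliancePoly (SimpleGraph.cycleGraph n)
      = C (n : ℤ) * X ^ (n - 2) + C ((n : ℤ) * ((n : ℤ) - 2)) * X ^ n + X ^ (n + 2) ∧
    (∃ k : ℕ,
      (∀ i j : ℕ, i ≤ j → j ≤ k →
        (((alliancePoly (SimpleGraph.cycleGraph n)).support.sort (· ≤ ·)).map
            (alliancePoly (SimpleGraph.cycleGraph n)).coeff).getD i 0
          ≤ (((alliancePoly (SimpleGraph.cycleGraph n)).support.sort (· ≤ ·)).map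
              (alliancePoly (SimpleGraph.cycleGraph n)).coeff).getD j 0) ∧
      (∀ i j : ℕ, k ≤ i → i ≤ j →
        j < (alliancePoly (SimpleGraph.cycleGraph n)).support.card →
        (((alliancePoly (SimpleGraph.cycleGraph n)).support.sort (· ≤ ·)).map
            (alliancePoly (SimpleGraph.cycleGraph n)).coeff).getD j 0
          ≤ (((alliancePoly (SimpleGraph.cycleGraph n)).support.sort (· ≤ ·)).map
              (alliancePoly (SimpleGraph.cycleGraph n)).coeff).getD i 0)) := by
  haveI : NeZero n := ⟨by omega⟩
  have hform := AllianceScratch.alliance_formula (n := n) hn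
  have hn3 : (3 : ℤ) ≤ (n : ℤ) := by exact_mod_cast hn
  have hab : (n : ℤ) ≤ (n : ℤ) * ((n : ℤ) - 2) := by nlinarith
  have hb1 : (1 : ℤ) ≤ (n : ℤ) * ((n : ℤ) - 2) := by nlinarith
  have hsort : (alliancePoly (SimpleGraph.cycleGraph n)).support.sort (· ≤ ·)
      = [n - 2, n, n + 2] := by
    rw [hform, AllianceScratch.support_formula hn, AllianceScratch.sort_three hn]
  have c1 : (alliancePoly (SimpleGraph.cycleGraph n)).coeff (n - 2) = (n : ℤ) := by
    rw [hform, AllianceScratch.coeff_formula hn, if_pos rfl, if_neg (by omega),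
      if_neg (by omega)]
    ring
  have c2 : (alliancePoly (SimpleGraph.cycleGraph n)).coeff n
      = (n : ℤ) * ((n : ℤ) - 2) := by
    rw [hform, AllianceScratch.coeff_formula hn, if_neg (by omega), if_pos rfl,
      if_neg (by omega)]
    ring
  have c3 : (alliancePoly (SimpleGraph.cycleGraph n)).coeff (n + 2) = 1 := by
    rw [hform, AllianceScratch.coeff_formula hn, if_neg (by omega), if_neg (by omega),
      if_pos rfl]
    ring
  have hmap : ((alliancePoly (SimpleGraph.cycleGraph n)).support.sort (· ≤ ·)).map
      (alliancePoly (SimpleGraph.cycleGraph n)).coeff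
      = [(n : ℤ), (n : ℤ) * ((n : ℤ) - 2), 1] := by
    rw [hsort, List.map_cons, List.map_cons, List.map_cons, List.map_nil, c1, c2, c3]
  have hcard : (alliancePoly (SimpleGraph.cycleGraph n)).support.card = 3 := by
    rw [hform, AllianceScratch.support_formula hn,
      Finset.card_insert_of_notMem (by
        simp only [Finset.mem_insert, Finset.mem_singleton]; omega),
      Finset.card_insert_of_notMem (by
        simp only [Finset.mem_singleton]; omega),
      Finset.card_singleton]
  refine ⟨hform, 1, ?_, ?_⟩
  · intro i j hij hj1
    rw [hmap]
    interval_cases j <;> interval_cases i <;>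
      first
        | exact le_refl _
        | simpa using hab
        | simpa using hb1
        | omega
  · intro i j h1i hij hj
    rw [hcard] at hj
    rw [hmap]
    interval_cases j <;> interval_cases i <;>
      first
        | exact le_refl _
        | simpa using hab
        | simpa using hb1
        | omega
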